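/- The Burgers-type negative symmetries u_{x z_i} = u_x(u_{z_i} - δ_i)/(u - α_i) - (u - α_i) u_{z_i}, i = 1,2, are compatible: defining u_{z_1 z_2} = (1/(u-α_1) + 1/(u-α_2)) u_{z_1} u_{z_2} + δ_2 (u-α_1) u_{z_1}/((α_1-α_2)(u-α_2)) + δ_1 (u-α_2) u_{z_2}/((α_2-α_1)(u-α_1)), the cross-derivative identity D_{z_2}(G_1) = D_{z_1}(G_2) holds identically, where G_i denotes the right-hand side of the i-th negative symmetry and derivatives are computed using the given equations and their differential consequences. -/

import Mathlib

/-- Right-hand side `G_i(u, u_x, u_{z_i})` of the Burgers negative symmetry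
`u_{x z_i} = u_x (u_{z_i} - δ)/(u - α) - (u - α) u_{z_i}`. -/
noncomputable def G (α δ : ℝ) (u ux uz : ℝ) : ℝ :=
  ux * (uz - δ) / (u - α) - (u - α) * uz

/-- Right-hand side of the cross equation `u_{z₁ z₂} = P`. -/
noncomputable def Pcross (α₁ α₂ δ₁ δ₂ : ℝ) (u uz1 uz2 : ℝ) : ℝ :=
  (1 / (u - α₁) + 1 / (u - α₂)) * uz1 * uz2
    + δ₂ * (u - α₁) * uz1 / ((α₁ - α₂) * (u - α₂))
    + δ₁ * (u - α₂) * uz2 / ((α₂ - α₁) * (u - α₁))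

lemma deriv_G_u (α δ ux uz u : ℝ) (hu : u ≠ α) :
    deriv (fun t => G α δ t ux uz) u = -(ux * (uz - δ)) / (u - α) ^ 2 - uz := by
  have h : u - α ≠ 0 := sub_ne_zero.mpr hu
  have h1 : HasDerivAt (fun t : ℝ => t - α) 1 u := by
    simpa using (hasDerivAt_id u).sub_const α
  have h2 : HasDerivAt (fun t : ℝ => ux * (uz - δ) / (t - α))
      (-(ux * (uz - δ)) / (u - α) ^ 2) u := by
    have := (hasDerivAt_const u (ux * (uz - δ))).div h1 h
    simpa [mul_comm, Pi.div_def] using this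
  have h3 : HasDerivAt (fun t : ℝ => (t - α) * uz) uz u := by
    simpa using h1.mul_const uz
  exact (h2.sub h3).deriv

lemma deriv_G_ux (α δ u uz ux : ℝ) :
    deriv (fun t => G α δ u t uz) ux = (uz - δ) / (u - α) := by
  have h2 : HasDerivAt (fun t : ℝ => t * (uz - δ) / (u - α))
      ((uz - δ) / (u - α)) ux := by
    simpa [mul_div_assoc] using
      (hasDerivAt_id ux).mul_const ((uz - δ) / (u - α))
  have h3 : HasDerivAt (fun _ : ℝ => (u - α) * uz) 0 ux := hasDerivAt_const _ _
  simpa [Pi.sub_def, G] using (h2.sub h3).deriv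

lemma deriv_G_uz (α δ u ux uz : ℝ) :
    deriv (fun t => G α δ u ux t) uz = ux / (u - α) - (u - α) := by
  have h2 : HasDerivAt (fun t : ℝ => ux * (t - δ) / (u - α)) (ux / (u - α)) uz := by
    have h : HasDerivAt (fun t : ℝ => ux * (t - δ)) ux uz := by
      simpa using ((hasDerivAt_id uz).sub_const δ).const_mul ux
    simpa using h.div_const (u - α)
  have h3 : HasDerivAt (fun t : ℝ => (u - α) * t) (u - α) uz := by
    simpa using (hasDerivAt_id uz).const_mul (u - α)
  exact (h2.sub h3).deriv

theorem stmt8 (α₁ α₂ δ₁ δ₂ : ℝ) (hα : α₁ ≠ α₂) :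
    ∀ u ux uz1 uz2 : ℝ, u ≠ α₁ → u ≠ α₂ →
      -- D_{z₂}(G₁) = ∂_u G₁ · u_{z₂} + ∂_{u_x} G₁ · u_{x z₂} + ∂_{u_{z₁}} G₁ · u_{z₁ z₂}
      deriv (fun t => G α₁ δ₁ t ux uz1) u * uz2
        + deriv (fun t => G α₁ δ₁ u t uz1) ux * G α₂ δ₂ u ux uz2
        + deriv (fun t => G α₁ δ₁ u ux t) uz1 * Pcross α₁ α₂ δ₁ δ₂ u uz1 uz2
      = deriv (fun t => G α₂ δ₂ t ux uz2) u * uz1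
        + deriv (fun t => G α₂ δ₂ u t uz2) ux * G α₁ δ₁ u ux uz1
        + deriv (fun t => G α₂ δ₂ u ux t) uz2 * Pcross α₁ α₂ δ₁ δ₂ u uz1 uz2 := by
  intro u ux uz1 uz2 h1 h2
  have d1 : u - α₁ ≠ 0 := sub_ne_zero.mpr h1
  have d2 : u - α₂ ≠ 0 := sub_ne_zero.mpr h2
  have dα : α₁ - α₂ ≠ 0 := sub_ne_zero.mpr hα
  have dα' : α₂ - α₁ ≠ 0 := sub_ne_zero.mpr hα.symm
  rw [deriv_G_u α₁ δ₁ ux uz1 u h1, deriv_G_u α₂ δ₂ ux uz2 u h2,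
    deriv_G_ux, deriv_G_ux, deriv_G_uz, deriv_G_uz]
  simp only [G, Pcross]
  field_simp
  ring
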